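/- Let K be a perfect field with char K ≠ 2 and (V, σ) a symplectic K-vector space of dimension 2n. For every self-adjoint operator f : V → V there exists a Darboux basis of V such that the matrix of f in this basis is [[B, 0],[0, Bᵀ]] for some B ∈ M_{n×n}(K). -/

import Mathlib

open Polynomial Module

namespace SympAux

variable {K : Type*} {V : Type*} [Field K] [AddCommGroup V] [Module K V]

lemma skew (σ : LinearMap.BilinForm K V) (halt : ∀ v, σ v v = 0) (x y : V) :
    σ x y = - σ y x := by
  have h := halt (x + y)
  simp only [map_add, LinearMap.add_apply, halt] at h
  rw [eq_neg_iff_add_eq_zero]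
  linear_combination h

variable (σ : LinearMap.BilinForm K V) (f : Module.End K V)

lemma pow_selfAdj (hsa : ∀ v w, σ v (f w) = σ (f v) w) (n : ℕ) (x y : V) :
    σ ((f ^ n) x) y = σ x ((f ^ n) y) := by
  induction n generalizing x y with
  | zero => simp
  | succ n ih =>
    have h1 : (f ^ (n+1)) x = (f ^ n) (f x) := by rw [pow_succ, Module.End.mul_apply]
    have h2 : (f ^ (n+1)) y = f ((f ^ n) y) := by rw [pow_succ', Module.End.mul_apply]
    rw [h1, h2, ih, hsa]

lemma aeval_selfAdj (hsa : ∀ v w, σ v (f w) = σ (f v) w) (g : K[X]) (x y : V) :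
    σ ((aeval f g) x) y = σ x ((aeval f g) y) := by
  induction g using Polynomial.induction_on' with
  | add p q hp hq => simp only [map_add, LinearMap.add_apply, hp, hq]
  | monomial n a =>
    rw [aeval_monomial]
    simp only [Module.End.mul_apply, Module.algebraMap_end_apply, map_smul,
      LinearMap.smul_apply]
    rw [pow_selfAdj σ f hsa n]

lemma aeval_comm_apply (g h : K[X]) (x : V) :
    aeval f g (aeval f h x) = aeval f (g * h) x := by
  rw [map_mul, Module.End.mul_apply]

lemma cyclic_isotropic (halt : ∀ v, σ v v = 0) (hsa : ∀ v w, σ v (f w) = σ (f v) w)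
    (hchar : (2 : K) ≠ 0) (x : V) (g h : K[X]) :
    σ (aeval f g x) (aeval f h x) = 0 := by
  have key : ∀ r : K[X], σ (aeval f r x) x = 0 := by
    intro r
    have h1 : σ (aeval f r x) x = σ x (aeval f r x) := aeval_selfAdj σ f hsa r x x
    have h2 : σ (aeval f r x) x = - σ x (aeval f r x) := skew σ halt _ _
    have : (2 : K) * σ (aeval f r x) x = 0 := by
      rw [two_mul]; nth_rewrite 2 [h2]; rw [← h1]; ring
    exact (mul_eq_zero.mp this).resolve_left hchar
  rw [← aeval_selfAdj σ f hsa h, aeval_comm_apply, key]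






lemma exists_compl_poly {p : K[X]} (hp : Irreducible p) (k : ℕ) {g : K[X]}
    (hg : ¬ p ^ k ∣ g) :
    ∃ c a : K[X], g * c = p ^ (k - 1) - a * p ^ k := by
  have hg0 : g ≠ 0 := by rintro rfl; exact hg (dvd_zero _)
  have hfin : FiniteMultiplicity p g := FiniteMultiplicity.of_prime_left hp.prime hg0
  obtain ⟨r, hgr, hpr⟩ := hfin.exists_eq_pow_mul_and_not_dvd
  set j := multiplicity p g with hj
  have hjk : j < k := by
    by_contra hle
    exact hg (dvd_trans (pow_dvd_pow p (le_of_not_gt hle)) ⟨r, hgr⟩)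
  obtain ⟨a, b, hab⟩ := (IsCoprime.pow_left (m := k) (hp.coprime_iff_not_dvd.mpr hpr))
  refine ⟨p ^ (k - 1 - j) * b, p ^ (k - 1) * a, ?_⟩
  have hpow : p ^ j * p ^ (k - 1 - j) = p ^ (k - 1) := by
    rw [← pow_add]; congr 1; omega
  have hb : b * r = 1 - a * p ^ k := by linear_combination hab
  calc g * (p ^ (k - 1 - j) * b) = (p ^ j * p ^ (k - 1 - j)) * (b * r) := by
        rw [hgr]; ring
    _ = p ^ (k - 1) * (1 - a * p ^ k) := by rw [hpow, hb]
    _ = p ^ (k - 1) - p ^ (k - 1) * a * p ^ k := by ring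



lemma key_vec (f : Module.End K V) {p : K[X]} (hp : Irreducible p) {k : ℕ} {v : V}
    (hv : aeval f (p ^ k) v = 0) {g : K[X]} (hg : ¬ p ^ k ∣ g) :
    ∃ c : K[X], aeval f (g * c) v = aeval f (p ^ (k - 1)) v := by
  obtain ⟨c, a, hc⟩ := exists_compl_poly hp k hg
  refine ⟨c, ?_⟩
  rw [hc, map_sub, LinearMap.sub_apply, map_mul, Module.End.mul_apply, hv, map_zero,
    sub_zero]



/-- The linear map `g ↦ (aeval f g) v`. -/
noncomputable def cyc (f : Module.End K V) (v : V) : K[X] →ₗ[K] V where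
  toFun g := aeval f g v
  map_add' g h := by simp [map_add, LinearMap.add_apply]
  map_smul' c g := by simp

@[simp] lemma cyc_apply (f : Module.End K V) (v : V) (g : K[X]) :
    cyc f v g = aeval f g v := rfl

lemma split_step [FiniteDimensional K V] (hchar : (2 : K) ≠ 0)
    (σ : LinearMap.BilinForm K V) (halt : ∀ v, σ v v = 0) (hnd : σ.Nondegenerate)
    (f : Module.End K V) (hsa : ∀ v w, σ v (f w) = σ (f v) w) (hV : Nontrivial V) :
    ∃ L₀ M₀ : Submodule K V, L₀ ≠ ⊥ ∧
      (∀ x ∈ L₀, f x ∈ L₀) ∧ (∀ x ∈ M₀, f x ∈ M₀) ∧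
      (∀ x ∈ L₀, ∀ y ∈ L₀, σ x y = 0) ∧ (∀ x ∈ M₀, ∀ y ∈ M₀, σ x y = 0) ∧
      (∀ x ∈ L₀, (∀ y ∈ M₀, σ x y = 0) → x = 0) ∧
      (∀ x ∈ M₀, (∀ y ∈ L₀, σ x y = 0) → x = 0) := by
  classical
  set μ := minpoly K f with hμdef
  have hint : IsIntegral K f := LinearMap.isIntegral f
  have hμ0 : μ ≠ 0 := minpoly.ne_zero hint
  have hμdeg : 0 < μ.natDegree := minpoly.natDegree_pos hint
  have hμu : ¬ IsUnit μ := by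
    intro h
    have := natDegree_eq_zero_of_isUnit h
    omega
  obtain ⟨p, hp, hpμ⟩ := WfDvdMonoid.exists_irreducible_factor hμu hμ0
  have hfinμ : FiniteMultiplicity p μ := FiniteMultiplicity.of_prime_left hp.prime hμ0
  obtain ⟨q, hμeq, hq⟩ := hfinμ.exists_eq_pow_mul_and_not_dvd
  set k := multiplicity p μ with hk
  have hk1 : 1 ≤ k := by
    by_contra h
    push_neg at h
    interval_cases k
    · rw [pow_zero, one_mul] at hμeq
      exact hq (hμeq ▸ hpμ)
  have hq0 : q ≠ 0 := by rintro rfl; rw [mul_zero] at hμeq; exact hμ0 hμeq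
  have hp0 : p ≠ 0 := hp.ne_zero
  have hpd : 0 < p.natDegree := hp.natDegree_pos
  -- the operator (aeval f) (p^(k-1) * q) is nonzero
  have hproper : ¬ μ ∣ p ^ (k - 1) * q := by
    intro hdvd
    have hne : p ^ (k - 1) * q ≠ 0 := mul_ne_zero (pow_ne_zero _ hp0) hq0
    have hdeg := Polynomial.natDegree_le_of_dvd hdvd hne
    rw [hμeq] at hdeg
    rw [natDegree_mul (pow_ne_zero _ hp0) hq0, natDegree_mul (pow_ne_zero _ hp0) hq0,
      natDegree_pow, natDegree_pow] at hdeg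
    have : k * p.natDegree ≤ (k - 1) * p.natDegree := by omega
    have h2 : k ≤ k - 1 := Nat.le_of_mul_le_mul_right (by simpa [mul_comm] using this) hpd
    omega
  have hEne : (aeval f) (p ^ (k - 1) * q) ≠ 0 := fun h => hproper (minpoly.dvd K f h)
  obtain ⟨u, hu⟩ : ∃ u : V, aeval f (p ^ (k - 1) * q) u ≠ 0 := by
    by_contra h
    push_neg at h
    exact hEne (LinearMap.ext fun u => h u)
  set v := aeval f q u with hv
  have hv1 : aeval f (p ^ (k - 1)) v ≠ 0 := by
    rw [hv, aeval_comm_apply]; exact hu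
  have hv0 : aeval f (p ^ k) v = 0 := by
    rw [hv, aeval_comm_apply, ← hμeq, minpoly.aeval]
    rfl
  obtain ⟨w', hw'⟩ : ∃ w', σ (aeval f (p ^ (k - 1)) v) w' ≠ 0 := by
    by_contra h
    push_neg at h
    exact hv1 (hnd.1 _ h)
  obtain ⟨a, b, hab⟩ := IsCoprime.pow_left (m := k) (hp.coprime_iff_not_dvd.mpr hq)
  set w₁ := aeval f (q * b) w' with hw₁def
  have hqb : q * b = 1 - a * p ^ k := by linear_combination hab
  have hw0 : aeval f (p ^ k) w₁ = 0 := by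
    rw [hw₁def, aeval_comm_apply, show p ^ k * (q * b) = b * (p ^ k * q) by ring, ← hμeq,
      ← aeval_comm_apply, minpoly.aeval]
    simp
  have hw1 : σ (aeval f (p ^ (k - 1)) v) w₁ ≠ 0 := by
    have step : σ (aeval f (p ^ (k - 1)) v) w₁ = σ (aeval f ((q * b) * p ^ (k - 1)) v) w' := by
      rw [hw₁def, ← aeval_selfAdj σ f hsa, aeval_comm_apply]
    have step2 : aeval f ((q * b) * p ^ (k - 1)) v = aeval f (p ^ (k - 1)) v := by
      rw [hqb, show (1 - a * p ^ k) * p ^ (k - 1) = p ^ (k - 1) - (a * p ^ (k -1)) * p ^ k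
        by ring, map_sub, LinearMap.sub_apply, map_mul, Module.End.mul_apply, hv0, map_zero,
        sub_zero]
    rw [step, step2]; exact hw'
  refine ⟨LinearMap.range (cyc f v), LinearMap.range (cyc f w₁), ?_, ?_, ?_, ?_, ?_, ?_, ?_⟩
  · -- L₀ ≠ ⊥
    intro hbot
    have hvmem : v ∈ LinearMap.range (cyc f v) := ⟨1, by simp⟩
    rw [hbot, Submodule.mem_bot] at hvmem
    exact hv1 (by rw [hvmem, map_zero])
  · rintro x ⟨g, rfl⟩
    exact ⟨X * g, by simp [aeval_comm_apply]⟩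
  · rintro x ⟨g, rfl⟩
    exact ⟨X * g, by simp [aeval_comm_apply]⟩
  · rintro x ⟨g, rfl⟩ y ⟨h, rfl⟩
    simpa using cyclic_isotropic σ f halt hsa hchar v g h
  · rintro x ⟨g, rfl⟩ y ⟨h, rfl⟩
    simpa using cyclic_isotropic σ f halt hsa hchar w₁ g h
  · rintro x ⟨g, rfl⟩ h0
    simp only [cyc_apply]
    by_cases hdvd : p ^ k ∣ g
    · obtain ⟨s, rfl⟩ := hdvd
      rw [mul_comm, ← aeval_comm_apply, hv0, map_zero]
    · exfalso
      obtain ⟨c, hc⟩ := key_vec f hp hv0 hdvd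
      have hy : aeval f c w₁ ∈ LinearMap.range (cyc f w₁) := ⟨c, rfl⟩
      have := h0 _ hy
      rw [cyc_apply, ← aeval_selfAdj σ f hsa, aeval_comm_apply, mul_comm, hc] at this
      exact hw1 this
  · rintro x ⟨h, rfl⟩ h0
    simp only [cyc_apply]
    by_cases hdvd : p ^ k ∣ h
    · obtain ⟨s, rfl⟩ := hdvd
      rw [mul_comm, ← aeval_comm_apply, hw0, map_zero]
    · exfalso
      obtain ⟨c, hc⟩ := key_vec f hp hv0 hdvd
      have hy : aeval f c v ∈ LinearMap.range (cyc f v) := ⟨c, rfl⟩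
      have h1 := h0 _ hy
      rw [cyc_apply, skew σ halt, ← aeval_selfAdj σ f hsa, aeval_comm_apply, hc,
        neg_eq_zero] at h1
      exact hw1 h1



lemma core {K : Type u} [Field K] (hchar : (2 : K) ≠ 0) :
    ∀ (d : ℕ) {V : Type v} [AddCommGroup V] [Module K V] [FiniteDimensional K V],
      Module.finrank K V = d →
      ∀ (σ : LinearMap.BilinForm K V), (∀ v, σ v v = 0) → σ.Nondegenerate →
      ∀ (f : Module.End K V), (∀ v w, σ v (f w) = σ (f v) w) →
      ∃ L M : Submodule K V,
        L ⊔ M = ⊤ ∧ L ⊓ M = ⊥ ∧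
        (∀ x ∈ L, f x ∈ L) ∧ (∀ x ∈ M, f x ∈ M) ∧
        (∀ x ∈ L, ∀ y ∈ L, σ x y = 0) ∧ (∀ x ∈ M, ∀ y ∈ M, σ x y = 0) := by
  intro d
  induction d using Nat.strong_induction_on with
  | _ d IH =>
  intro V _ _ _ hd σ halt hnd f hsa
  rcases Nat.eq_zero_or_pos d with hd0 | hdpos
  · -- trivial case
    subst hd0
    have hsub : Subsingleton V := Module.finrank_zero_iff.mp hd
    refine ⟨⊥, ⊥, ?_, by simp, ?_, ?_, ?_, ?_⟩
    · rw [eq_top_iff]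
      intro x _
      rw [Subsingleton.elim x 0]
      exact Submodule.zero_mem _
    · intro x hx; rw [Subsingleton.elim (f x) 0]; exact Submodule.zero_mem _
    · intro x hx; rw [Subsingleton.elim (f x) 0]; exact Submodule.zero_mem _
    · intro x hx; rw [Submodule.mem_bot] at hx; subst hx; simp
    · intro x hx; rw [Submodule.mem_bot] at hx; subst hx; simp
  · have hnt : Nontrivial V := Module.nontrivial_of_finrank_pos (R := K) (by omega)
    obtain ⟨L₀, M₀, hL₀ne, hL₀f, hM₀f, hL₀iso, hM₀iso, hL₀nd, hM₀nd⟩ :=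
      split_step hchar σ halt hnd f hsa hnt
    set W := L₀ ⊔ M₀ with hW
    have hL₀W : L₀ ≤ W := le_sup_left
    have hM₀W : M₀ ≤ W := le_sup_right
    have hWf : ∀ x ∈ W, f x ∈ W := by
      intro x hx
      obtain ⟨l, hl, m, hm, rfl⟩ := Submodule.mem_sup.mp hx
      rw [map_add]
      exact Submodule.add_mem_sup (hL₀f l hl) (hM₀f m hm)
    have hrefl : σ.IsRefl := LinearMap.IsAlt.isRefl halt
    have hWnd : (σ.restrict W).Nondegenerate := by
      refine (LinearMap.IsRefl.nondegenerate_iff_separatingLeft (B := σ.restrict W) (fun x y h => hrefl _ _ h)).mpr ?_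
      rintro ⟨x, hx⟩ hx0
      obtain ⟨l, hl, m, hm, hx'⟩ := Submodule.mem_sup.mp hx
      have hall : ∀ y ∈ W, σ x y = 0 := by
        intro y hy
        exact hx0 ⟨y, hy⟩
      have hm0 : m = 0 := by
        apply hM₀nd m hm
        intro y hy
        have h1 : σ x y = 0 := hall y (hL₀W hy)
        rw [← hx', map_add, LinearMap.add_apply, hL₀iso l hl y hy, zero_add] at h1
        exact h1
      have hl0 : l = 0 := by
        apply hL₀nd l hl
        intro y hy
        have h1 : σ x y = 0 := hall y (hM₀W hy)
        rw [← hx', hm0, add_zero] at h1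
        exact h1
      have : x = 0 := by rw [← hx', hl0, hm0, add_zero]
      exact Subtype.ext this
    have hcompl : IsCompl W (σ.orthogonal W) :=
      LinearMap.BilinForm.isCompl_orthogonal_of_restrict_nondegenerate hrefl hWnd
    set U := σ.orthogonal W with hU
    have hWU : ∀ w ∈ W, ∀ u ∈ U, σ w u = 0 := by
      intro w hw u hu
      exact (LinearMap.BilinForm.mem_orthogonal_iff.mp hu) w hw
    have hUW : ∀ u ∈ U, ∀ w ∈ W, σ u w = 0 := by
      intro u hu w hw
      rw [skew σ halt, hWU w hw u hu, neg_zero]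
    have hUf : ∀ x ∈ U, f x ∈ U := by
      intro x hx
      rw [LinearMap.BilinForm.mem_orthogonal_iff]
      intro w hw
      show σ w (f x) = 0
      rw [hsa]
      exact hWU (f w) (hWf w hw) x hx
    set fU := f.restrict hUf with hfU
    set σU := σ.restrict U with hσU
    have altU : ∀ x : U, σU x x = 0 := fun x => halt x
    have ndU : σU.Nondegenerate := by
      refine (LinearMap.IsRefl.nondegenerate_iff_separatingLeft (B := σU) (fun x y h => hrefl _ _ h)).mpr ?_
      rintro ⟨x, hx⟩ h0
      have : x = 0 := by
        apply hnd.1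
        intro z
        obtain ⟨w, u, hw, hu, rfl⟩ := Submodule.codisjoint_iff_exists_add_eq.mp
          hcompl.codisjoint z
        rw [map_add]
        have h1 : σ x w = 0 := hUW x hx w hw
        have h2 : σ x u = 0 := h0 ⟨u, hu⟩
        rw [h1, h2, add_zero]
      exact Subtype.ext this
    have hsaU : ∀ x y : U, σU x (fU y) = σU (fU x) y := by
      intro x y
      show σ (x : V) ((fU y : U) : V) = σ ((fU x : U) : V) (y : V)
      rw [LinearMap.restrict_coe_apply, LinearMap.restrict_coe_apply]
      exact hsa x y
    have hsum : Module.finrank K W + Module.finrank K U = d := by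
      rw [← hd, ← Submodule.finrank_add_eq_of_isCompl hcompl]
    have hWpos : 0 < Module.finrank K W := by
      rcases (Submodule.ne_bot_iff L₀).mp hL₀ne with ⟨x, hx, hx0⟩
      have : Nontrivial W := ⟨⟨⟨x, hL₀W hx⟩, 0, by simp [Subtype.ext_iff, hx0]⟩⟩
      exact Module.finrank_pos_iff.mpr this
    have hUlt : Module.finrank K U < d := by omega
    obtain ⟨LU, MU, hsupU, hinfU, hLUf, hMUf, hLUiso, hMUiso⟩ :=
      IH (Module.finrank K U) hUlt rfl σU altU ndU fU hsaU
    set Lv := LU.map U.subtype with hLv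
    set Mv := MU.map U.subtype with hMv
    have hLvU : Lv ≤ U := Submodule.map_subtype_le U LU
    have hMvU : Mv ≤ U := Submodule.map_subtype_le U MU
    have hLiso : ∀ x ∈ L₀ ⊔ Lv, ∀ y ∈ L₀ ⊔ Lv, σ x y = 0 := by
      intro x hx y hy
      obtain ⟨a, ha, b, hb, rfl⟩ := Submodule.mem_sup.mp hx
      obtain ⟨c, hc, e, he, rfl⟩ := Submodule.mem_sup.mp hy
      have h1 : σ a c = 0 := hL₀iso a ha c hc
      have h2 : σ a e = 0 := hWU a (hL₀W ha) e (hLvU he)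
      have h3 : σ b c = 0 := hUW b (hLvU hb) c (hL₀W hc)
      have h4 : σ b e = 0 := by
        obtain ⟨b', hb', rfl⟩ := Submodule.mem_map.mp hb
        obtain ⟨e', he', rfl⟩ := Submodule.mem_map.mp he
        simpa [hσU] using hLUiso b' hb' e' he'
      simp only [map_add, LinearMap.add_apply, h1, h2, h3, h4, add_zero, zero_add]
    have hMiso : ∀ x ∈ M₀ ⊔ Mv, ∀ y ∈ M₀ ⊔ Mv, σ x y = 0 := by
      intro x hx y hy
      obtain ⟨a, ha, b, hb, rfl⟩ := Submodule.mem_sup.mp hx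
      obtain ⟨c, hc, e, he, rfl⟩ := Submodule.mem_sup.mp hy
      have h1 : σ a c = 0 := hM₀iso a ha c hc
      have h2 : σ a e = 0 := hWU a (hM₀W ha) e (hMvU he)
      have h3 : σ b c = 0 := hUW b (hMvU hb) c (hM₀W hc)
      have h4 : σ b e = 0 := by
        obtain ⟨b', hb', rfl⟩ := Submodule.mem_map.mp hb
        obtain ⟨e', he', rfl⟩ := Submodule.mem_map.mp he
        simpa [hσU] using hMUiso b' hb' e' he'
      simp only [map_add, LinearMap.add_apply, h1, h2, h3, h4, add_zero, zero_add]
    have hsup : (L₀ ⊔ Lv) ⊔ (M₀ ⊔ Mv) = ⊤ := by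
      rw [sup_sup_sup_comm, ← hW, hLv, hMv, ← Submodule.map_sup, hsupU,
        Submodule.map_subtype_top]
      exact hcompl.sup_eq_top
    refine ⟨L₀ ⊔ Lv, M₀ ⊔ Mv, hsup, ?_, ?_, ?_, hLiso, hMiso⟩
    · rw [eq_bot_iff]
      rintro x ⟨hxL, hxM⟩
      have hx0 : x = 0 := by
        apply hnd.1
        intro y
        have hy : y ∈ (L₀ ⊔ Lv) ⊔ (M₀ ⊔ Mv) := hsup.symm ▸ Submodule.mem_top
        obtain ⟨y₁, hy₁, y₂, hy₂, rfl⟩ := Submodule.mem_sup.mp hy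
        rw [map_add, hLiso x hxL y₁ hy₁, hMiso x hxM y₂ hy₂, add_zero]
      rw [hx0]
      exact Submodule.zero_mem ⊥
    · intro x hx
      obtain ⟨a, ha, b, hb, rfl⟩ := Submodule.mem_sup.mp hx
      rw [map_add]
      refine Submodule.add_mem_sup (hL₀f a ha) ?_
      obtain ⟨b', hb', rfl⟩ := Submodule.mem_map.mp hb
      have : f (U.subtype b') = U.subtype (fU b') := (LinearMap.restrict_coe_apply f hUf b').symm
      rw [this]
      exact Submodule.mem_map_of_mem (hLUf b' hb')
    · intro x hx
      obtain ⟨a, ha, b, hb, rfl⟩ := Submodule.mem_sup.mp hx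
      rw [map_add]
      refine Submodule.add_mem_sup (hM₀f a ha) ?_
      obtain ⟨b', hb', rfl⟩ := Submodule.mem_map.mp hb
      have : f (U.subtype b') = U.subtype (fU b') := (LinearMap.restrict_coe_apply f hUf b').symm
      rw [this]
      exact Submodule.mem_map_of_mem (hMUf b' hb')

end SympAux

/-- The σ-orthogonal complement `W^σ = {v ∈ V | σ(v,w) = 0 ∀ w ∈ W}`. -/
def sympOrth {K V : Type*} [Field K] [AddCommGroup V] [Module K V]
    (σ : LinearMap.BilinForm K V) (W : Submodule K V) : Submodule K V where
  carrier := {v | ∀ w ∈ W, σ v w = 0}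
  add_mem' := by intro a b ha hb w hw; simp [ha w hw, hb w hw]
  zero_mem' := by intro w hw; simp
  smul_mem' := by intro c a ha w hw; simp [ha w hw]

/-- `W` is a symplectic subspace: the restriction of `σ` to `W` is non-degenerate. -/
def IsSymplecticSubspace {K V : Type*} [Field K] [AddCommGroup V] [Module K V]
    (σ : LinearMap.BilinForm K V) (W : Submodule K V) : Prop :=
  ∀ v ∈ W, (∀ w ∈ W, σ v w = 0) → v = 0

/-- A Darboux basis: `σ(uᵢ,uⱼ)=0`, `σ(wᵢ,wⱼ)=0`, `σ(wᵢ,uⱼ)=δᵢⱼ`, where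
`uᵢ = b (Sum.inl i)` and `wᵢ = b (Sum.inr i)`. -/
def IsDarbouxBasis {K V : Type*} [Field K] [AddCommGroup V] [Module K V] {n : ℕ}
    (σ : LinearMap.BilinForm K V) (b : Basis (Fin n ⊕ Fin n) K V) : Prop :=
  (∀ i j, σ (b (Sum.inl i)) (b (Sum.inl j)) = 0) ∧
  (∀ i j, σ (b (Sum.inr i)) (b (Sum.inr j)) = 0) ∧
  (∀ i j, σ (b (Sum.inr i)) (b (Sum.inl j)) = if i = j then 1 else 0)

theorem perfect_selfAdjoint_block_pair
    {K V : Type*} [Field K] [PerfectField K] [AddCommGroup V] [Module K V]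
    [FiniteDimensional K V]
    (hchar : (2 : K) ≠ 0) (n : ℕ) (hn : 0 < n)
    (hdim : Module.finrank K V = 2 * n)
    (σ : LinearMap.BilinForm K V) (halt : ∀ v, σ v v = 0) (hnd : σ.Nondegenerate)
    (f : Module.End K V) (hsa : ∀ v w, σ v (f w) = σ (f v) w) :
    ∃ b : Basis (Fin n ⊕ Fin n) K V, IsDarbouxBasis σ b ∧
      ∃ B : Matrix (Fin n) (Fin n) K,
        LinearMap.toMatrix b b f = Matrix.fromBlocks B 0 0 B.transpose := by
  classical
  obtain ⟨L, M, hsup, hinf, hLf, hMf, hLiso, hMiso⟩ :=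
    SympAux.core hchar (Module.finrank K V) rfl σ halt hnd f hsa
  have hcompl : IsCompl L M := ⟨disjoint_iff.mpr hinf, codisjoint_iff.mpr hsup⟩
  have hrefl : σ.IsRefl := LinearMap.IsAlt.isRefl halt
  -- dimensions
  have hLle : L ≤ σ.orthogonal L := by
    intro x hx
    rw [LinearMap.BilinForm.mem_orthogonal_iff]
    intro y hy
    exact hLiso y hy x hx
  have hMle : M ≤ σ.orthogonal M := by
    intro x hx
    rw [LinearMap.BilinForm.mem_orthogonal_iff]
    intro y hy
    exact hMiso y hy x hx
  have h1 : Module.finrank K L ≤ Module.finrank K (σ.orthogonal L) :=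
    Submodule.finrank_mono hLle
  have h2 : Module.finrank K (σ.orthogonal L) = Module.finrank K V - Module.finrank K L :=
    LinearMap.BilinForm.finrank_orthogonal hnd L
  have h1' : Module.finrank K M ≤ Module.finrank K (σ.orthogonal M) :=
    Submodule.finrank_mono hMle
  have h2' : Module.finrank K (σ.orthogonal M) = Module.finrank K V - Module.finrank K M :=
    LinearMap.BilinForm.finrank_orthogonal hnd M
  have h3 : Module.finrank K L ≤ Module.finrank K V := Submodule.finrank_le L
  have h3' : Module.finrank K M ≤ Module.finrank K V := Submodule.finrank_le M
  have hsumr : Module.finrank K L + Module.finrank K M = Module.finrank K V :=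
    Submodule.finrank_add_eq_of_isCompl hcompl
  have hLn : Module.finrank K L = n := by omega
  have hMn : Module.finrank K M = n := by omega
  let bL : Basis (Fin n) K L := Module.finBasisOfFinrankEq K L hLn
  -- the pairing M → Dual L
  let Φ : M →ₗ[K] Module.Dual K L :=
    { toFun := fun m => (σ m.1).comp L.subtype
      map_add' := by intro m m'; ext l; simp
      map_smul' := by intro c m; ext l; simp }
  have hker : ∀ m : M, Φ m = 0 → m = 0 := by
    intro m hm
    have hx0 : (m : V) = 0 := by
      apply hnd.1
      intro y
      have hy : y ∈ L ⊔ M := hsup.symm ▸ Submodule.mem_top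
      obtain ⟨y₁, hy₁, y₂, hy₂, rfl⟩ := Submodule.mem_sup.mp hy
      have e1 : σ (m : V) y₁ = 0 := by
        exact LinearMap.congr_fun hm ⟨y₁, hy₁⟩
      have e2 : σ (m : V) y₂ = 0 := hMiso (m : V) m.2 y₂ hy₂
      rw [map_add, e1, e2, add_zero]
    exact Subtype.ext hx0
  have hΦinj : Function.Injective Φ := by
    rw [← LinearMap.ker_eq_bot]
    exact LinearMap.ker_eq_bot'.mpr hker
  have hdim2 : Module.finrank K M = Module.finrank K (Module.Dual K L) := by
    rw [hMn, Subspace.dual_finrank_eq, hLn]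
  let eΦ : M ≃ₗ[K] Module.Dual K L := Φ.linearEquivOfInjective hΦinj hdim2
  let bM : Basis (Fin n) K M := bL.dualBasis.map eΦ.symm
  have hpair : ∀ i j, σ ((bM i : M) : V) ((bL j : L) : V) = if i = j then 1 else 0 := by
    intro i j
    have h1 : Φ (bM i) = bL.dualBasis i := by
      show Φ (eΦ.symm (bL.dualBasis i)) = bL.dualBasis i
      rw [← Φ.linearEquivOfInjective_apply hΦinj hdim2]
      exact eΦ.apply_symm_apply _
    have h2 := LinearMap.congr_fun h1 (bL j)
    simp only [LinearMap.coe_comp, Function.comp_apply, Submodule.coe_subtype,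
      Basis.dualBasis_apply_self] at h2
    have h3 : σ ((bM i : M) : V) ((bL j : L) : V) = if j = i then 1 else 0 := h2
    rw [h3]
    rcases eq_or_ne i j with rfl | hne
    · simp
    · simp [hne, Ne.symm hne]
  let bV : Basis (Fin n ⊕ Fin n) K V := (bL.prod bM).map (Submodule.prodEquivOfIsCompl L M hcompl)
  have hbVl : ∀ i, bV (Sum.inl i) = ((bL i : L) : V) := by
    intro i
    show Submodule.prodEquivOfIsCompl L M hcompl ((bL.prod bM) (Sum.inl i)) = _
    have : (bL.prod bM) (Sum.inl i) = ((bL i : L), (0 : M)) :=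
      Prod.ext (bL.prod_apply_inl_fst bM i) (bL.prod_apply_inl_snd bM i)
    rw [this, Submodule.coe_prodEquivOfIsCompl']
    simp
  have hbVr : ∀ i, bV (Sum.inr i) = ((bM i : M) : V) := by
    intro i
    show Submodule.prodEquivOfIsCompl L M hcompl ((bL.prod bM) (Sum.inr i)) = _
    have : (bL.prod bM) (Sum.inr i) = ((0 : L), (bM i : M)) :=
      Prod.ext (bL.prod_apply_inr_fst bM i) (bL.prod_apply_inr_snd bM i)
    rw [this, Submodule.coe_prodEquivOfIsCompl']
    simp
  -- coordinate formulas
  have hreprl : ∀ (x : V) (i : Fin n), bV.repr x (Sum.inl i) = σ ((bM i : M) : V) x := by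
    intro x i
    have heq : σ ((bM i : M) : V) = bV.coord (Sum.inl i) := by
      apply bV.ext
      rintro (j | j)
      · rw [hbVl j, Basis.coord_apply, ← hbVl j, Basis.repr_self, Finsupp.single_apply]
        rw [hbVl j, hpair i j]
        rcases eq_or_ne i j with rfl | hne
        · simp
        · simp [hne, Ne.symm hne]
      · rw [hbVr j, Basis.coord_apply, ← hbVr j, Basis.repr_self, Finsupp.single_apply]
        rw [hbVr j]
        rw [hMiso _ (SetLike.coe_mem (bM i)) _ (SetLike.coe_mem (bM j))]
        simp
    rw [← Basis.coord_apply, ← heq]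
  have hreprr : ∀ (x : V) (j : Fin n), bV.repr x (Sum.inr j) = σ x ((bL j : L) : V) := by
    intro x j
    have heq : σ.flip ((bL j : L) : V) = bV.coord (Sum.inr j) := by
      apply bV.ext
      rintro (i | i)
      · show σ (bV (Sum.inl i)) ((bL j : L) : V) = (bV.coord (Sum.inr j)) (bV (Sum.inl i))
        rw [hbVl i, Basis.coord_apply, ← hbVl i, Basis.repr_self, Finsupp.single_apply]
        rw [hbVl i]
        rw [hLiso _ (SetLike.coe_mem (bL i)) _ (SetLike.coe_mem (bL j))]
        simp
      · show σ (bV (Sum.inr i)) ((bL j : L) : V) = (bV.coord (Sum.inr j)) (bV (Sum.inr i))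
        rw [hbVr i, Basis.coord_apply, ← hbVr i, Basis.repr_self, Finsupp.single_apply]
        rw [hbVr i, hpair i j]
        rcases eq_or_ne i j with rfl | hne
        · simp
        · simp [hne, Ne.symm hne]
    rw [← Basis.coord_apply, ← heq]
    rfl
  refine ⟨bV, ⟨?_, ?_, ?_⟩, ?_⟩
  · intro i j
    rw [hbVl i, hbVl j]
    exact hLiso _ (SetLike.coe_mem (bL i)) _ (SetLike.coe_mem (bL j))
  · intro i j
    rw [hbVr i, hbVr j]
    exact hMiso _ (SetLike.coe_mem (bM i)) _ (SetLike.coe_mem (bM j))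
  · intro i j
    rw [hbVr i, hbVl j]
    exact hpair i j
  · refine ⟨Matrix.of (fun i j => σ ((bM i : M) : V) (f ((bL j : L) : V))), ?_⟩
    ext i' j'
    rw [LinearMap.toMatrix_apply]
    rcases i' with i | i <;> rcases j' with j | j
    · rw [Matrix.fromBlocks_apply₁₁, hbVl j, hreprl]
      rfl
    · rw [Matrix.fromBlocks_apply₁₂, hbVr j, hreprl, hsa]
      have : f ((bM i : M) : V) ∈ M := hMf _ (SetLike.coe_mem (bM i))
      rw [hMiso _ this _ (SetLike.coe_mem (bM j))]
      rfl
    · rw [Matrix.fromBlocks_apply₂₁, hbVl j, hreprr]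
      have : f ((bL j : L) : V) ∈ L := hLf _ (SetLike.coe_mem (bL j))
      rw [hLiso _ this _ (SetLike.coe_mem (bL i))]
      rfl
    · rw [Matrix.fromBlocks_apply₂₂, Matrix.transpose_apply, hbVr j, hreprr, ← hsa]
      rfl
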